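/- For every integer r ≥ 2 and every real α ∈ (0,1] there exists a constant c_{r,α} > 0 such that for every probability mass function (p_k)_{k≥r} on the integers k ≥ r with ∑_{k≥r} k^{1+α} p_k < ∞, the quantity p_c := 1 - 1/(max_{x∈[0,1]} G^r(x)) satisfies p_c ≥ c_{r,α} · ( ∑_{k≥r} k^{1+α} p_k )^{-1/α}, where G^r(x) = ∑_{k≥r} p_k · g_k^r(x). -/

import Mathlib

/-- The polynomial `g_k^r(x) = ∑_{i=0}^{r-1} C(k,i) x^(k-i-1) (1-x)^i`. -/
noncomputable def g (r k : ℕ) (x : ℝ) : ℝ :=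
  ∑ i ∈ Finset.range r, (k.choose i : ℝ) * x ^ (k - i - 1) * (1 - x) ^ i

open Finset

noncomputable def P (r k : ℕ) (x : ℝ) : ℝ :=
  ∑ i ∈ Finset.range r, (k.choose i : ℝ) * x ^ (k - i) * (1 - x) ^ i

lemma g_nonneg {r k : ℕ} {x : ℝ} (hx : x ∈ Set.Icc (0:ℝ) 1) : 0 ≤ g r k x := by
  obtain ⟨h0, h1⟩ := hx
  apply Finset.sum_nonneg
  intro i _
  have := pow_nonneg h0 (k - i - 1)
  have := pow_nonneg (by linarith : (0:ℝ) ≤ 1 - x) i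
  positivity

lemma P_nonneg {r k : ℕ} {x : ℝ} (hx : x ∈ Set.Icc (0:ℝ) 1) : 0 ≤ P r k x := by
  obtain ⟨h0, h1⟩ := hx
  apply Finset.sum_nonneg
  intro i _
  have := pow_nonneg h0 (k - i)
  have := pow_nonneg (by linarith : (0:ℝ) ≤ 1 - x) i
  positivity

lemma xg {r k : ℕ} (hk : r ≤ k) (x : ℝ) : x * g r k x = P r k x := by
  unfold g P
  rw [Finset.mul_sum]
  apply Finset.sum_congr rfl
  intro i hi
  rw [Finset.mem_range] at hi
  have h : x ^ (k - i) = x * x ^ (k - i - 1) := by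
    rw [← pow_succ']
    congr 1
    omega
  rw [h]
  ring

lemma P_succ {r k : ℕ} (hr : 2 ≤ r) (hk : r ≤ k) (x : ℝ) :
    P r (k+1) x = P r k x - (k.choose (r-1) : ℝ) * x ^ (k - r + 1) * (1 - x) ^ r := by
  obtain ⟨s, rfl⟩ : ∃ s, r = s + 1 := ⟨r - 1, by omega⟩
  have e0 : s + 1 - 1 = s := rfl
  rw [e0]
  unfold P
  rw [Finset.sum_range_succ' _ s]
  have h1 : ∀ i ∈ Finset.range s,
      ((k+1).choose (i+1) : ℝ) * x ^ (k + 1 - (i+1)) * (1 - x) ^ (i+1)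
      = (k.choose i : ℝ) * x ^ (k - i) * (1 - x) ^ (i+1)
        + x * ((k.choose (i+1) : ℝ) * x ^ (k - (i+1)) * (1 - x) ^ (i+1)) := by
    intro i hi
    rw [Finset.mem_range] at hi
    rw [Nat.choose_succ_succ']
    push_cast
    have hx3 : x ^ (k - i) = x * x ^ (k - (i+1)) := by
      rw [← pow_succ']
      congr 1
      omega
    rw [hx3]
    ring
  rw [Finset.sum_congr rfl h1, Finset.sum_add_distrib]
  have h2 : ∑ i ∈ Finset.range s, (k.choose i : ℝ) * x ^ (k - i) * (1 - x) ^ (i+1)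
      = (1 - x) * ((∑ i ∈ Finset.range (s+1), (k.choose i : ℝ) * x ^ (k - i) * (1 - x) ^ i)
          - (k.choose s : ℝ) * x ^ (k - s) * (1 - x) ^ s) := by
    rw [Finset.sum_range_succ, add_sub_cancel_right, Finset.mul_sum]
    apply Finset.sum_congr rfl
    intro i _
    rw [pow_succ]
    ring
  have h3 : ∑ i ∈ Finset.range s, x * ((k.choose (i+1) : ℝ) * x ^ (k - (i+1)) * (1 - x) ^ (i+1))
      = x * ((∑ i ∈ Finset.range (s+1), (k.choose i : ℝ) * x ^ (k - i) * (1 - x) ^ i)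
          - (k.choose 0 : ℝ) * x ^ (k - 0) * (1 - x) ^ 0) := by
    rw [Finset.sum_range_succ' _ s, ← Finset.mul_sum]
    simp
  have e3 : ((k+1).choose 0 : ℝ) * x ^ (k + 1 - 0) * (1 - x) ^ 0 = x * ((k.choose 0 : ℝ) * x ^ (k - 0) * (1-x) ^ 0) := by
    simp [pow_succ]
    ring
  rw [h2, h3, e3]
  have e4 : (k.choose s : ℝ) * x ^ (k - (s+1) + 1) * (1-x) ^ (s+1)
      = (k.choose s : ℝ) * x ^ (k - s) * (1-x) ^ s * (1-x) := by
    have h5 : k - (s+1) + 1 = k - s := by omega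
    rw [h5, pow_succ]
    ring
  rw [e4]
  ring

lemma P_base {r : ℕ} (hr : 1 ≤ r) (x : ℝ) : P r r x = 1 - (1 - x) ^ r := by
  have hb : ((1 - x) + x) ^ r = ∑ i ∈ Finset.range (r + 1), (1-x) ^ i * x ^ (r - i) * (r.choose i : ℝ) :=
    add_pow (1 - x) x r
  have h1 : ((1:ℝ) - x) + x = 1 := by ring
  rw [h1, one_pow, Finset.sum_range_succ] at hb
  simp only [Nat.choose_self, Nat.sub_self, pow_zero, Nat.cast_one, mul_one] at hb
  unfold P
  have h2 : ∑ i ∈ Finset.range r, (r.choose i : ℝ) * x ^ (r - i) * (1 - x) ^ i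
      = ∑ i ∈ Finset.range r, (1-x) ^ i * x ^ (r - i) * (r.choose i : ℝ) := by
    apply Finset.sum_congr rfl
    intro i _
    ring
  rw [h2]
  linarith

lemma P_le {r k : ℕ} (hr : 2 ≤ r) (hk : r ≤ k) {x : ℝ} (hx : x ∈ Set.Icc (0:ℝ) 1) :
    P r k x ≤ 1 - (1 - x) ^ r := by
  induction k, hk using Nat.le_induction with
  | base => rw [P_base (by omega)]
  | succ k hk ih =>
    rw [P_succ hr hk]
    have h0 := hx.1
    have h1 := hx.2
    have : 0 ≤ (k.choose (r-1) : ℝ) * x ^ (k - r + 1) * (1 - x) ^ r := by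
      have := pow_nonneg h0 (k - r + 1)
      have := pow_nonneg (by linarith : (0:ℝ) ≤ 1 - x) r
      positivity
    linarith

lemma g_le {r k : ℕ} (hr : 2 ≤ r) (hk : r ≤ k) {x : ℝ} (hx : x ∈ Set.Icc (0:ℝ) 1) :
    g r k x ≤ r := by
  rcases eq_or_lt_of_le hx.1 with h0 | h0
  · -- x = 0
    rcases eq_or_lt_of_le hk with hkr | hkr
    · subst hkr
      unfold g
      rw [Finset.sum_eq_single (r - 1)]
      · rw [← h0]
        have e1 : r - (r-1) - 1 = 0 := by omega
        rw [e1]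
        have e2 : r.choose (r-1) = r := by
          rw [Nat.choose_symm (by omega : 1 ≤ r), Nat.choose_one_right]
        simp [e2]
      · intro i hi hne
        rw [Finset.mem_range] at hi
        rw [← h0, zero_pow (by omega : r - i - 1 ≠ 0)]
        ring
      · intro h
        simp at h
        omega
    · unfold g
      rw [← h0]
      have : ∀ i ∈ Finset.range r, (k.choose i : ℝ) * (0:ℝ) ^ (k - i - 1) * (1 - 0) ^ i = 0 := by
        intro i hi
        rw [Finset.mem_range] at hi
        rw [zero_pow (by omega : k - i - 1 ≠ 0)]
        ring
      rw [Finset.sum_congr rfl this]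
      simp
  · -- 0 < x
    have hP := P_le hr hk hx
    have hbern : 1 - (r:ℝ) * x ≤ (1 - x) ^ r := by
      have hb : (1:ℝ) + (r:ℝ) * (-x) ≤ (1 + -x) ^ r := one_add_mul_le_pow (by linarith [hx.2] : (-2:ℝ) ≤ -x) r
      simp only [sub_eq_add_neg]
      linarith [hb]
    have hxg := xg hk x
    have : x * g r k x ≤ (r:ℝ) * x := by
      rw [hxg]; linarith
    exact (mul_le_mul_iff_right₀ h0).mp (by linarith : x * g r k x ≤ x * (r:ℝ))

lemma binom_split {r k : ℕ} (hk : r ≤ k) (x : ℝ) :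
    P r k x + ∑ i ∈ Finset.Ico r (k+1), (k.choose i : ℝ) * x ^ (k - i) * (1 - x) ^ i = 1 := by
  have hb : ((1 - x) + x) ^ k = ∑ i ∈ Finset.range (k + 1), (1-x) ^ i * x ^ (k - i) * (k.choose i : ℝ) :=
    add_pow (1 - x) x k
  have h1 : ((1:ℝ) - x) + x = 1 := by ring
  rw [h1, one_pow] at hb
  have h2 : ∑ i ∈ Finset.range (k+1), (k.choose i : ℝ) * x ^ (k - i) * (1 - x) ^ i = 1 := by
    have h3 : ∑ i ∈ Finset.range (k+1), (k.choose i : ℝ) * x ^ (k - i) * (1 - x) ^ i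
        = ∑ i ∈ Finset.range (k+1), (1-x) ^ i * x ^ (k - i) * (k.choose i : ℝ) :=
      Finset.sum_congr rfl (by intro i _; ring)
    rw [h3, ← hb]
  rw [← Finset.sum_range_add_sum_Ico _ (by omega : r ≤ k + 1)] at h2
  exact h2

lemma one_sub_P_le {r k : ℕ} (hr : 2 ≤ r) (hk : r ≤ k) {x α : ℝ} (hα : 0 < α) (hα1 : α ≤ 1)
    (hx : x ∈ Set.Icc (0:ℝ) 1) :
    1 - P r k x ≤ ((k:ℝ) * (1 - x)) ^ (1 + α) := by
  obtain ⟨h0, h1⟩ := hx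
  have hq0 : (0:ℝ) ≤ 1 - x := by linarith
  have hQ : 1 - P r k x = ∑ i ∈ Finset.Ico r (k+1), (k.choose i : ℝ) * x ^ (k - i) * (1 - x) ^ i := by
    have := binom_split hk x
    linarith
  rw [hQ]
  rcases le_or_gt 1 ((k:ℝ) * (1 - x)) with hkq | hkq
  · -- k q ≥ 1 : bound by 1
    have hle1 : ∑ i ∈ Finset.Ico r (k+1), (k.choose i : ℝ) * x ^ (k - i) * (1 - x) ^ i ≤ 1 := by
      have hP := P_nonneg (r := r) (k := k) (x := x) ⟨h0, h1⟩
      linarith [hQ]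
    calc _ ≤ (1:ℝ) := hle1
    _ = (1:ℝ) ^ (1 + α) := (Real.one_rpow _).symm
    _ ≤ ((k:ℝ) * (1 - x)) ^ (1 + α) := Real.rpow_le_rpow (by norm_num) hkq (by linarith)
  · -- k q ≤ 1
    have hterm : ∀ i ∈ Finset.Ico 2 (k+1), (0:ℝ) ≤ (k.choose i : ℝ) * x ^ (k - i) * (1 - x) ^ i := by
      intro i _
      have := pow_nonneg h0 (k - i)
      have := pow_nonneg hq0 i
      positivity
    have hsub : ∑ i ∈ Finset.Ico r (k+1), (k.choose i : ℝ) * x ^ (k - i) * (1 - x) ^ i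
        ≤ ∑ i ∈ Finset.Ico 2 (k+1), (k.choose i : ℝ) * x ^ (k - i) * (1 - x) ^ i := by
      apply Finset.sum_le_sum_of_subset_of_nonneg (Finset.Ico_subset_Ico hr le_rfl)
      intro i hi _
      exact hterm i hi
    have hre : ∑ i ∈ Finset.Ico 2 (k+1), (k.choose i : ℝ) * x ^ (k - i) * (1 - x) ^ i
        = ∑ j ∈ Finset.range (k+1-2), (k.choose (2+j) : ℝ) * x ^ (k - (2+j)) * (1 - x) ^ (2+j) :=
      Finset.sum_Ico_eq_sum_range _ _ _
    have hbound : ∀ j ∈ Finset.range (k+1-2),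
        (k.choose (2+j) : ℝ) * x ^ (k - (2+j)) * (1 - x) ^ (2+j)
        ≤ (k.choose 2 : ℝ) * (1-x)^2 * ((k-2).choose j * x ^ (k-2-j) * (1-x)^j) := by
      intro j hj
      rw [Finset.mem_range] at hj
      have hjk : 2 + j ≤ k := by omega
      have hcm : k.choose (2+j) * (2+j).choose 2 = k.choose 2 * (k-2).choose j := by
        simpa using Nat.choose_mul (n := k) (k := 2+j) (s := 2) (by omega)
      have hc1 : k.choose (2+j) ≤ k.choose 2 * (k-2).choose j := by
        calc k.choose (2+j) ≤ k.choose (2+j) * (2+j).choose 2 :=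
          Nat.le_mul_of_pos_right _ (Nat.choose_pos (by omega))
        _ = k.choose 2 * (k-2).choose j := hcm
      have hc1' : (k.choose (2+j) : ℝ) ≤ (k.choose 2 : ℝ) * ((k-2).choose j : ℝ) := by
        exact_mod_cast hc1
      have he : x ^ (k - (2+j)) = x ^ (k-2-j) := by congr 1; omega
      have he2 : (1-x) ^ (2+j) = (1-x)^2 * (1-x)^j := by rw [← pow_add]
      rw [he, he2]
      have h1' := pow_nonneg h0 (k-2-j)
      have h2' := pow_nonneg hq0 j
      have h3' := pow_nonneg hq0 2
      nlinarith [mul_nonneg (mul_nonneg h1' h2') h3']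
    have hfull : ∑ j ∈ Finset.range (k+1-2), ((k-2).choose j : ℝ) * x ^ (k-2-j) * (1-x)^j = 1 := by
      have hb : ((1 - x) + x) ^ (k-2) = ∑ j ∈ Finset.range ((k-2) + 1), (1-x) ^ j * x ^ (k-2-j) * ((k-2).choose j : ℝ) :=
        add_pow (1 - x) x (k-2)
      have h1' : ((1:ℝ) - x) + x = 1 := by ring
      rw [h1', one_pow] at hb
      have he3 : k+1-2 = (k-2)+1 := by omega
      rw [he3]
      have h3 : ∑ j ∈ Finset.range ((k-2)+1), ((k-2).choose j : ℝ) * x ^ (k-2-j) * (1-x)^j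
          = ∑ j ∈ Finset.range ((k-2)+1), (1-x) ^ j * x ^ (k-2-j) * ((k-2).choose j : ℝ) :=
        Finset.sum_congr rfl (by intro i _; ring)
      rw [h3, ← hb]
    have step : ∑ i ∈ Finset.Ico r (k+1), (k.choose i : ℝ) * x ^ (k - i) * (1 - x) ^ i
        ≤ (k.choose 2 : ℝ) * (1-x)^2 := by
      calc _ ≤ ∑ i ∈ Finset.Ico 2 (k+1), (k.choose i : ℝ) * x ^ (k - i) * (1 - x) ^ i := hsub
      _ = ∑ j ∈ Finset.range (k+1-2), (k.choose (2+j) : ℝ) * x ^ (k - (2+j)) * (1 - x) ^ (2+j) := hre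
      _ ≤ ∑ j ∈ Finset.range (k+1-2), (k.choose 2 : ℝ) * (1-x)^2 * (((k-2).choose j : ℝ) * x ^ (k-2-j) * (1-x)^j) := by
          apply Finset.sum_le_sum
          intro j hj
          have := hbound j hj
          linarith [this]
      _ = (k.choose 2 : ℝ) * (1-x)^2 * ∑ j ∈ Finset.range (k+1-2), ((k-2).choose j : ℝ) * x ^ (k-2-j) * (1-x)^j := by
          rw [Finset.mul_sum]
      _ = (k.choose 2 : ℝ) * (1-x)^2 := by rw [hfull]; ring
    have hc2 : (k.choose 2 : ℝ) ≤ (k:ℝ)^2 := by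
      have : k.choose 2 ≤ k * k := by
        rw [Nat.choose_two_right]
        exact le_trans (Nat.div_le_self _ _) (Nat.mul_le_mul_left _ (by omega))
      calc (k.choose 2 : ℝ) ≤ (k : ℝ) * k := by exact_mod_cast this
      _ = (k:ℝ)^2 := by ring
    have hsq : (k.choose 2 : ℝ) * (1-x)^2 ≤ ((k:ℝ) * (1-x))^2 := by
      have h3' := pow_nonneg hq0 2
      nlinarith
    have hrp : ((k:ℝ) * (1-x))^2 ≤ ((k:ℝ) * (1-x)) ^ (1 + α) := by
      have hkq0 : (0:ℝ) ≤ (k:ℝ) * (1-x) := by positivity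
      have := Real.rpow_le_rpow_of_exponent_ge' hkq0 (le_of_lt hkq) (by linarith) (by linarith : 1 + α ≤ (2:ℝ))
      calc ((k:ℝ) * (1-x))^2 = ((k:ℝ) * (1-x)) ^ ((2:ℕ):ℝ) := by
            rw [Real.rpow_natCast]
      _ ≤ _ := by
            convert this using 3 <;> norm_num
    linarith

/-- For every `r ≥ 2` and `α ∈ (0,1]` there is a constant `c > 0` such that
for every offspring distribution `(p_k)_{k≥r}` with finite `(1+α)`-moment, the critical
probability `p_c = 1 - 1/(max_{x∈[0,1]} G^r(x))` satisfies
`p_c ≥ c · (∑_{k≥r} k^(1+α) p_k)^(-1/α)`. -/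
theorem pc_lower_bound_moment (r : ℕ) (hr : 2 ≤ r) (α : ℝ) (hα : α ∈ Set.Ioc (0 : ℝ) 1) :
    ∃ c : ℝ, 0 < c ∧
      ∀ p : ℕ → ℝ, (∀ k, k < r → p k = 0) → (∀ k, 0 ≤ p k) → (∑' k : ℕ, p k = 1) →
        (Summable fun k : ℕ => (k : ℝ) ^ (1 + α) * p k) →
        c * (∑' k : ℕ, (k : ℝ) ^ (1 + α) * p k) ^ (-1 / α) ≤
          1 - 1 / sSup ((fun x => ∑' k : ℕ, p k * g r k x) '' Set.Icc (0 : ℝ) 1) := by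
  obtain ⟨hα0, hα1⟩ := hα
  refine ⟨(2:ℝ) ^ (-1/α) / 2, by positivity, ?_⟩
  intro p hp0 hpnn hsum1 hmom
  set M := ∑' k : ℕ, (k:ℝ) ^ (1+α) * p k with hM
  have hpsum : Summable p := by
    by_contra h
    rw [tsum_eq_zero_of_not_summable h] at hsum1
    norm_num at hsum1
  have hkge : ∀ k, p k ≠ 0 → r ≤ k := by
    intro k h
    by_contra hh
    exact h (hp0 k (by omega))
  have hM2 : (2:ℝ) ≤ M := by
    have hle : ∀ k, 2 * p k ≤ (k:ℝ) ^ (1+α) * p k := by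
      intro k
      rcases eq_or_ne (p k) 0 with h | h
      · simp [h]
      · have hk := hkge k h
        have hk2 : (2:ℝ) ≤ (k:ℝ) := by exact_mod_cast le_trans hr hk
        have h2k : (2:ℝ) ≤ (k:ℝ) ^ (1+α) := by
          calc (2:ℝ) ≤ (k:ℝ) := hk2
          _ = (k:ℝ) ^ (1:ℝ) := (Real.rpow_one _).symm
          _ ≤ (k:ℝ) ^ (1+α) := Real.rpow_le_rpow_of_exponent_le (by linarith) (by linarith)
        have := hpnn k
        nlinarith
    calc (2:ℝ) = 2 * ∑' k, p k := by rw [hsum1]; ring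
    _ = ∑' k, 2 * p k := tsum_mul_left.symm
    _ ≤ M := Summable.tsum_le_tsum hle (hpsum.mul_left 2) hmom
  have hMpos : (0:ℝ) < M := by linarith
  set q : ℝ := (2*M) ^ (-1/α) with hq
  have hqpos : 0 < q := Real.rpow_pos_of_pos (by linarith) _
  have hinv : -1/α ≤ -1 := by
    have h1 : 1 ≤ 1/α := by rw [le_div_iff₀ hα0]; linarith
    have : -1/α = -(1/α) := by ring
    linarith [this ▸ le_refl (-1/α)]
  have hq4 : q ≤ 1/4 := by
    calc q ≤ (4:ℝ) ^ (-1/α) :=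
          Real.rpow_le_rpow_of_nonpos (by norm_num) (by linarith) (by
            have : (0:ℝ) < 1/α := by positivity
            linarith [hinv])
    _ ≤ (4:ℝ) ^ (-1:ℝ) := Real.rpow_le_rpow_of_exponent_le (by norm_num) hinv
    _ = 1/4 := by rw [Real.rpow_neg_one]; norm_num
  have hqα : q ^ α = 1/(2*M) := by
    rw [hq, ← Real.rpow_mul (by linarith : (0:ℝ) ≤ 2*M)]
    rw [show (-1/α)*α = -1 by field_simp]
    rw [Real.rpow_neg_one, one_div]
  set x₀ : ℝ := 1 - q with hx₀def
  have hx₀ : x₀ ∈ Set.Icc (0:ℝ) 1 := ⟨by linarith, by linarith⟩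
  have hx₀pos : 0 < x₀ := by
    rw [hx₀def]; linarith
  set G : ℝ → ℝ := fun x => ∑' k : ℕ, p k * g r k x with hG
  have hptle : ∀ x ∈ Set.Icc (0:ℝ) 1, ∀ k, p k * g r k x ≤ (r:ℝ) * p k := by
    intro x hx k
    rcases eq_or_ne (p k) 0 with h | h
    · simp [h]
    · have hk := hkge k h
      have hgle := g_le hr hk hx
      have := hpnn k
      nlinarith
  have hGsum : ∀ x ∈ Set.Icc (0:ℝ) 1, Summable (fun k => p k * g r k x) := by
    intro x hx
    exact Summable.of_nonneg_of_le (fun k => mul_nonneg (hpnn k) (g_nonneg hx))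
      (hptle x hx) (hpsum.mul_left (r:ℝ))
  have hGle : ∀ x ∈ Set.Icc (0:ℝ) 1, G x ≤ r := by
    intro x hx
    calc G x ≤ ∑' k, (r:ℝ) * p k := Summable.tsum_le_tsum (hptle x hx) (hGsum x hx) (hpsum.mul_left (r:ℝ))
    _ = (r:ℝ) * ∑' k, p k := tsum_mul_left
    _ = r := by rw [hsum1]; ring
  have hBdd : BddAbove (G '' Set.Icc 0 1) := ⟨r, by rintro y ⟨x, hx, rfl⟩; exact hGle x hx⟩
  have hSup : G x₀ ≤ sSup (G '' Set.Icc 0 1) := le_csSup hBdd ⟨x₀, hx₀, rfl⟩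
  have hq1α : q ^ (1+α) * M = q / 2 := by
    rw [Real.rpow_add hqpos, Real.rpow_one, hqα]
    field_simp
  have hlow : ∀ k, p k * ((1 - ((k:ℝ)*q) ^ (1+α)) / x₀) ≤ p k * g r k x₀ := by
    intro k
    rcases eq_or_ne (p k) 0 with h | h
    · simp [h]
    · have hk := hkge k h
      apply mul_le_mul_of_nonneg_left _ (hpnn k)
      rw [div_le_iff₀ hx₀pos]
      have e : (1:ℝ) - x₀ = q := by rw [hx₀def]; ring
      have h1 := one_sub_P_le hr hk hα0 hα1 hx₀
      rw [e] at h1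
      have hxg := xg hk x₀
      linarith [h1, hxg]
  have hfun : (fun k : ℕ => p k * ((1 - ((k:ℝ)*q) ^ (1+α)) / x₀))
      = fun k : ℕ => (1/x₀) * (p k - q^(1+α) * ((k:ℝ)^(1+α) * p k)) := by
    funext k
    rw [Real.mul_rpow (Nat.cast_nonneg k) (le_of_lt hqpos)]
    field_simp
  have hrhs_sum : Summable (fun k : ℕ => p k * ((1 - ((k:ℝ)*q) ^ (1+α)) / x₀)) := by
    rw [hfun]
    exact ((hpsum.sub (hmom.mul_left _)).mul_left _)
  have htsum_rhs : ∑' k : ℕ, p k * ((1 - ((k:ℝ)*q) ^ (1+α)) / x₀) = (1 - q/2) / x₀ := by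
    rw [hfun, tsum_mul_left, Summable.tsum_sub hpsum (hmom.mul_left _), tsum_mul_left, hsum1, ← hM]
    rw [show q^(1+α) * M = q/2 from hq1α]
    field_simp
  have hGx₀ : (1 - q/2)/x₀ ≤ G x₀ := by
    rw [← htsum_rhs]
    exact Summable.tsum_le_tsum hlow hrhs_sum (hGsum x₀ hx₀)
  set S := sSup (G '' Set.Icc 0 1) with hS
  have hS1 : (1 - q/2)/x₀ ≤ S := le_trans hGx₀ hSup
  have hnum : (0:ℝ) < 1 - q/2 := by linarith
  have hSpos : 0 < S := lt_of_lt_of_le (by positivity) hS1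
  have h1S : 1/S ≤ x₀ / (1 - q/2) := by
    rw [div_le_div_iff₀ hSpos hnum]
    rw [div_le_iff₀ hx₀pos] at hS1
    nlinarith
  have hfin : q/2 ≤ 1 - 1/S := by
    have hd : x₀/(1-q/2) ≤ 1 - q/2 := by
      rw [div_le_iff₀ hnum, hx₀def]
      nlinarith
    linarith
  have hc : (2:ℝ)^(-1/α)/2 * M ^ (-1/α) = q/2 := by
    rw [hq, Real.mul_rpow (by norm_num) (le_of_lt hMpos)]
    ring
  rw [hc]
  exact hfin
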